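/- Let D be a finitely supported probability distribution over valuations on m items, let α ≥ 1, let p be an item pricing, let S ⊆ Fin m with p_j > 0 for every j ∈ S, and fix a selection rule A. Suppose that for every T ⊆ S there exists an item pricing q^T such that: (a) q^T_j ≥ p_j / α for every j ∈ T; and (b) E_{v∼D}[ Rev(v|T, q^T) ] ≥ (1/α) · E_{v∼D}[ p( A(v, p, Fin m) ∩ T ) ]. Then there exist nonnegative weights (λ_T)_{T ⊆ S} with ∑_{T ⊆ S} λ_T = 1 such that: (i) for every item j, ∑_{T ⊆ S} λ_T · Pr_{v∼D}[ j ∈ A(v, q^T, T) ] ≤ Pr_{v∼D}[ j ∈ A(v, p, Fin m) ]; and (ii) ∑_{T ⊆ S} λ_T · E_{v∼D}[ Rev(v|T, q^T) ] ≥ (1 − 1/e) · (1/α) · E_{v∼D}[ p( A(v, p, Fin m) ∩ S ) ]. -/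

import Mathlib

open Finset

/-- The total price of a bundle of items under an item pricing `p`. -/
def priceOf {m : ℕ} (p : Fin m → ℝ) (T : Finset (Fin m)) : ℝ := ∑ j ∈ T, p j

/-- A valuation assigns `0` to the empty set and is nonnegative. -/
def IsValuation {m : ℕ} (v : Finset (Fin m) → ℝ) : Prop :=
  v ∅ = 0 ∧ ∀ T, 0 ≤ v T

/-- `T` is a demanded bundle for valuation `v` at pricing `q` with available set `S`:
it maximizes utility `v(T) - q(T)` among subsets of `S`. -/
def IsDemanded {m : ℕ} (v : Finset (Fin m) → ℝ) (q : Fin m → ℝ)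
    (S T : Finset (Fin m)) : Prop :=
  T ⊆ S ∧ ∀ T' ⊆ S, v T' - priceOf q T' ≤ v T - priceOf q T

/-- The revenue `Rev(v|S, q)`: the maximum price of a demanded bundle (the buyer breaks
ties in favor of a most expensive demanded bundle). -/
noncomputable def BRev {m : ℕ} (v : Finset (Fin m) → ℝ) (q : Fin m → ℝ)
    (S : Finset (Fin m)) : ℝ :=
  sSup {r : ℝ | ∃ T, IsDemanded v q S T ∧ r = priceOf q T}

/-- A selection rule assigns to every triple `(v, q, S)` a demanded bundle whose price
realizes `Rev(v|S, q)`. -/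
def IsSelRule {m : ℕ}
    (A : (Finset (Fin m) → ℝ) → (Fin m → ℝ) → Finset (Fin m) → Finset (Fin m)) : Prop :=
  ∀ v q S, IsDemanded v q S (A v q S) ∧ priceOf q (A v q S) = BRev v q S

/-- A finitely supported probability distribution, given by a finite list of atoms. -/
structure FinDist (α : Type*) where
  card : ℕ
  val : Fin card → α
  prob : Fin card → ℝ
  prob_nonneg : ∀ i, 0 ≤ prob i
  prob_sum : ∑ i : Fin card, prob i = 1


set_option maxHeartbeats 1600000

section RRSAux
open Finset MeasureTheory intervalIntegral

lemma step_intervalIntegrable (c t a b : ℝ) :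
    IntervalIntegrable (fun θ : ℝ => if θ < c then t else 0) volume a b := by
  have h : (fun θ : ℝ => if θ < c then t else 0) = Set.indicator (Set.Iio c) (fun _ => t) := by
    funext θ; simp [Set.indicator, Set.mem_Iio]
  rw [h, intervalIntegrable_iff]
  exact (integrableOn_const (by simp [Real.volume_Ioc, Set.uIoc]) (by simp)).indicator
    measurableSet_Iio

lemma step_integral_le {c t b : ℝ} (hc : 0 ≤ c) (ht : 0 ≤ t) (hb : 0 ≤ b) :
    (∫ θ in (0:ℝ)..b, (if θ < c then t else 0)) ≤ t * c := by
  rcases le_or_gt b c with h | h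
  · calc (∫ θ in (0:ℝ)..b, (if θ < c then t else 0)) ≤ ∫ _ in (0:ℝ)..b, t := by
          refine integral_mono_on hb (step_intervalIntegrable c t 0 b)
            intervalIntegrable_const (fun θ _ => ?_)
          split <;> simp [ht]
      _ = (b - 0) • t := integral_const t
      _ ≤ t * c := by simp only [sub_zero, smul_eq_mul]; nlinarith
  · have h2 : (∫ θ in c..b, (if θ < c then t else 0)) = 0 := by
      rw [show (∫ θ in c..b, (if θ < c then t else 0)) = ∫ θ in c..b, (0:ℝ) from
        integral_congr (fun θ hθ => by
          rw [Set.uIcc_of_le h.le] at hθ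
          simp [not_lt.mpr hθ.1])]
      simp
    have h1 : (∫ θ in (0:ℝ)..c, (if θ < c then t else 0)) ≤ t * c := by
      calc (∫ θ in (0:ℝ)..c, (if θ < c then t else 0)) ≤ ∫ _ in (0:ℝ)..c, t := by
            refine integral_mono_on hc (step_intervalIntegrable c t 0 c)
              intervalIntegrable_const (fun θ _ => ?_)
            split <;> simp [ht]
        _ = (c - 0) • t := integral_const t
        _ = t * c := by simp [mul_comm]
    have hadd := integral_add_adjacent_intervals (step_intervalIntegrable c t 0 c)
      (step_intervalIntegrable c t c b)
    linarith [hadd]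

lemma core_dual_bound {m : ℕ} (S : Finset (Fin m)) (p y μ : Fin m → ℝ)
    (x : Finset (Fin m) → Fin m → ℝ) (R : Finset (Fin m) → ℝ) (α ν : ℝ) (hα0 : 0 < α)
    (hpS : ∀ j ∈ S, 0 < p j) (hy : ∀ j, 0 ≤ y j) (hμ : ∀ j, 0 ≤ μ j)
    (hx : ∀ T j, 0 ≤ x T j)
    (hF3 : ∀ T ∈ S.powerset, (1/α) * ∑ j ∈ T, p j * y j ≤ R T)
    (hF4 : ∀ T ∈ S.powerset, (1/α) * ∑ j ∈ T, p j * x T j ≤ R T)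
    (hdual : ∀ T ∈ S.powerset, R T ≤ ν + ∑ j ∈ T, μ j * x T j) :
    (1 - 1/Real.exp 1) * ((1/α) * ∑ j ∈ S, p j * y j) ≤ ν + ∑ j ∈ S, μ j * y j := by
  classical
  set c : Fin m → ℝ := fun j => (α * μ j) / (p j) with hc
  set t : Fin m → ℝ := fun j => (1/α) * (p j * y j) with ht
  set W : ℝ := (1/α) * ∑ j ∈ S, p j * y j with hW
  set g : ℝ → ℝ := fun θ => ∑ j ∈ S, (if θ < c j then t j else 0) with hg
  -- pointwise bound
  have key : ∀ θ : ℝ, 0 ≤ θ → θ < 1 → W - g θ ≤ ν * (1 - θ)⁻¹ := by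
    intro θ hθ0 hθ1
    set T : Finset (Fin m) := S.filter (fun j => c j ≤ θ) with hT
    have hTmem : T ∈ S.powerset := mem_powerset.2 (filter_subset _ _)
    have hWg : W - g θ = (1/α) * ∑ j ∈ T, p j * y j := by
      have hsplit := Finset.sum_filter_add_sum_filter_not S (fun j => θ < c j)
        (fun j => p j * y j)
      have hfeq : S.filter (fun j => ¬ θ < c j) = T := by
        rw [hT]; apply Finset.filter_congr; intro j _; simp [not_lt]
      rw [hfeq] at hsplit
      have hgθ : g θ = (1/α) * ∑ j ∈ S.filter (fun j => θ < c j), p j * y j := by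
        rw [hg]
        simp only [Finset.mul_sum, Finset.sum_filter, ht, mul_ite, mul_zero]
      rw [hW, hgθ, ← hsplit]; ring
    have hμx : ∑ j ∈ T, μ j * x T j ≤ θ * ((1/α) * ∑ j ∈ T, p j * x T j) := by
      rw [Finset.mul_sum, Finset.mul_sum]
      apply Finset.sum_le_sum
      intro j hj
      have hjS : j ∈ S := (Finset.mem_filter.1 hj).1
      have hpj : 0 < p j := hpS j hjS
      have hcj : c j ≤ θ := (Finset.mem_filter.1 hj).2
      have hj' : α * μ j ≤ θ * p j := by
        rw [hc] at hcj
        calc α * μ j = (α * μ j) / p j * p j := by field_simp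
          _ ≤ θ * p j := mul_le_mul_of_nonneg_right hcj hpj.le
      have hxj := hx T j
      calc μ j * x T j = (1/α) * ((α * μ j) * x T j) := by field_simp
        _ ≤ (1/α) * ((θ * p j) * x T j) := by
            apply mul_le_mul_of_nonneg_left (mul_le_mul_of_nonneg_right hj' hxj)
            positivity
        _ = θ * ((1/α) * (p j * x T j)) := by ring
    have hchain : (1 - θ) * ((1/α) * ∑ j ∈ T, p j * y j) ≤ ν := by
      have h3 := hF3 T hTmem
      have h4 := hF4 T hTmem
      have hd := hdual T hTmem
      have h5 : θ * ((1/α) * ∑ j ∈ T, p j * x T j) ≤ θ * R T :=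
        mul_le_mul_of_nonneg_left h4 hθ0
      have h6 : (1 - θ) * ((1/α) * ∑ j ∈ T, p j * y j) ≤ (1 - θ) * R T :=
        mul_le_mul_of_nonneg_left h3 (by linarith)
      nlinarith
    rw [hWg, ← div_eq_mul_inv, le_div_iff₀ (by linarith : (0:ℝ) < 1 - θ)]
    calc (1/α) * (∑ j ∈ T, p j * y j) * (1 - θ)
        = (1 - θ) * ((1/α) * ∑ j ∈ T, p j * y j) := by ring
      _ ≤ ν := hchain
  -- set up integration
  set b : ℝ := 1 - (Real.exp 1)⁻¹ with hbdef
  have hexp1 : (1:ℝ) < Real.exp 1 := by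
    have := Real.add_one_le_exp 1; linarith
  have hexpinv0 : (0:ℝ) < (Real.exp 1)⁻¹ := inv_pos.2 (Real.exp_pos 1)
  have hexpinv1 : (Real.exp 1)⁻¹ < 1 := by
    rw [inv_lt_one_iff₀]; right; exact hexp1
  have hb0 : 0 < b := by rw [hbdef]; linarith
  have hb1 : b < 1 := by rw [hbdef]; linarith
  have hgint : IntervalIntegrable g volume 0 b := by
    have hfeq : g = ∑ j ∈ S, (fun θ : ℝ => if θ < c j then t j else 0) := by
      rw [hg]; funext θ; simp [Finset.sum_apply]
    rw [hfeq]
    exact IntervalIntegrable.sum S (fun j _ => step_intervalIntegrable (c j) (t j) 0 b)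
  have hWgint : IntervalIntegrable (fun θ => W - g θ) volume 0 b :=
    intervalIntegrable_const.sub hgint
  have hνint : IntervalIntegrable (fun θ => ν * (1 - θ)⁻¹) volume 0 b := by
    apply ContinuousOn.intervalIntegrable
    apply ContinuousOn.mul continuousOn_const
    apply ContinuousOn.inv₀ (continuousOn_const.sub continuousOn_id)
    intro θ hθ
    rw [Set.uIcc_of_le hb0.le] at hθ
    have h2 := hθ.2
    intro hcon
    change (1:ℝ) - θ = 0 at hcon
    linarith
  have hmono : (∫ θ in (0:ℝ)..b, (W - g θ)) ≤ ∫ θ in (0:ℝ)..b, ν * (1 - θ)⁻¹ :=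
    integral_mono_on hb0.le hWgint hνint
      (fun θ hθ => key θ hθ.1 (lt_of_le_of_lt hθ.2 hb1))
  have hR : (∫ θ in (0:ℝ)..b, ν * (1 - θ)⁻¹) = ν := by
    rw [intervalIntegral.integral_const_mul]
    have hcsub : (∫ θ in (0:ℝ)..b, (1 - θ)⁻¹) = ∫ u in (1 - b)..(1 - 0:ℝ), u⁻¹ :=
      integral_comp_sub_left (fun u : ℝ => u⁻¹) 1
    rw [hcsub, integral_inv (by
      rw [Set.uIcc_of_le (by linarith : (1:ℝ) - b ≤ 1 - 0)]
      intro hcon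
      have h1 := hcon.1
      rw [hbdef] at h1
      simp only [sub_sub_cancel] at h1
      linarith)]
    have hdiv : (1 - 0) / (1 - b) = Real.exp 1 := by
      rw [hbdef]; simp only [sub_zero, sub_sub_cancel]
      rw [one_div, inv_inv]
    rw [hdiv, Real.log_exp, mul_one]
  have hLsub : (∫ θ in (0:ℝ)..b, (W - g θ))
      = b * W - ∫ θ in (0:ℝ)..b, g θ := by
    rw [integral_sub intervalIntegrable_const hgint, intervalIntegral.integral_const]
    simp [smul_eq_mul, mul_comm]
  have hgbound : (∫ θ in (0:ℝ)..b, g θ) ≤ ∑ j ∈ S, μ j * y j := by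
    have hsplit : (∫ θ in (0:ℝ)..b, g θ)
        = ∑ j ∈ S, ∫ θ in (0:ℝ)..b, (if θ < c j then t j else 0) := by
      rw [hg]
      exact intervalIntegral.integral_finset_sum
        (fun j _ => step_intervalIntegrable (c j) (t j) 0 b)
    rw [hsplit]
    apply Finset.sum_le_sum
    intro j hj
    have hpj := hpS j hj
    calc (∫ θ in (0:ℝ)..b, (if θ < c j then t j else 0)) ≤ t j * c j := by
          apply step_integral_le
          · rw [hc]; exact div_nonneg (mul_nonneg hα0.le (hμ j)) (hpS j hj).le
          · rw [ht]
            exact mul_nonneg (by positivity) (mul_nonneg (hpS j hj).le (hy j))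
          · exact hb0.le
      _ = μ j * y j := by rw [ht, hc]; field_simp
  have hfinal : b * W - ∑ j ∈ S, μ j * y j ≤ ν := by
    calc b * W - ∑ j ∈ S, μ j * y j ≤ b * W - ∫ θ in (0:ℝ)..b, g θ := by linarith
      _ = ∫ θ in (0:ℝ)..b, (W - g θ) := hLsub.symm
      _ ≤ ∫ θ in (0:ℝ)..b, ν * (1 - θ)⁻¹ := hmono
      _ = ν := hR
  have hb' : (1 - 1/Real.exp 1) = b := by rw [hbdef, one_div]
  rw [hb']
  linarith

lemma ray_lemma (C d v' : ℝ) (h : ∀ τ : ℝ, 0 ≤ τ → v' < C + τ * d) : 0 ≤ d := by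
  by_contra hd
  push_neg at hd
  have h0 := h 0 le_rfl
  have hτpos : 0 < (v' - C) / d := by
    rw [div_pos_iff]; right; exact ⟨by linarith, hd⟩
  have h1 := h ((v' - C) / d) hτpos.le
  rw [div_mul_cancel₀ _ (ne_of_lt hd)] at h1
  linarith

end RRSAux

/-- A revenue recovery scheme implies a convex-hull (contention
resolution) guarantee: given per-subset pricings `q^T` satisfying the RRS price and
revenue conditions, there is a distribution `λ` over subsets `T ⊆ S` whose induced random
pricing respects the per-item allocation of `p` and recovers a `(1 - 1/e)/α` fraction of
the revenue contribution of `S`. -/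
theorem rrs_implies_convex_hull_sampler
    (m : ℕ) (hm : 1 ≤ m)
    (D : FinDist (Finset (Fin m) → ℝ))
    (hD : ∀ a, 0 < D.prob a → IsValuation (D.val a))
    (α : ℝ) (hα : 1 ≤ α)
    (p : Fin m → ℝ) (hp : ∀ j, 0 ≤ p j)
    (S : Finset (Fin m)) (hpS : ∀ j ∈ S, 0 < p j)
    (A : (Finset (Fin m) → ℝ) → (Fin m → ℝ) → Finset (Fin m) → Finset (Fin m))
    (hA : IsSelRule A)
    (q : Finset (Fin m) → (Fin m → ℝ))
    (hq0 : ∀ T ∈ S.powerset, ∀ j, 0 ≤ q T j)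
    (hqa : ∀ T ∈ S.powerset, ∀ j ∈ T, p j / α ≤ q T j)
    (hqb : ∀ T ∈ S.powerset,
      (1 / α) * ∑ a, D.prob a * priceOf p (A (D.val a) p Finset.univ ∩ T) ≤
        ∑ a, D.prob a * BRev (D.val a) (q T) T) :
    ∃ lam : Finset (Fin m) → ℝ,
      (∀ T, 0 ≤ lam T) ∧
      (∑ T ∈ S.powerset, lam T = 1) ∧
      (∀ j : Fin m,
        (∑ T ∈ S.powerset, lam T *
          ∑ a, D.prob a * (if j ∈ A (D.val a) (q T) T then (1:ℝ) else 0)) ≤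
        ∑ a, D.prob a * (if j ∈ A (D.val a) p Finset.univ then (1:ℝ) else 0)) ∧
      ((1 - 1 / Real.exp 1) * (1 / α) *
          ∑ a, D.prob a * priceOf p (A (D.val a) p Finset.univ ∩ S) ≤
        ∑ T ∈ S.powerset, lam T * ∑ a, D.prob a * BRev (D.val a) (q T) T) := by
  classical
  have hα0 : (0:ℝ) < α := lt_of_lt_of_le one_pos hα
  set x : Finset (Fin m) → Fin m → ℝ :=
    fun T j => ∑ a, D.prob a * (if j ∈ A (D.val a) (q T) T then (1:ℝ) else 0) with hxdef
  set y : Fin m → ℝ :=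
    fun j => ∑ a, D.prob a * (if j ∈ A (D.val a) p Finset.univ then (1:ℝ) else 0) with hydef
  set R : Finset (Fin m) → ℝ := fun T => ∑ a, D.prob a * BRev (D.val a) (q T) T with hRdef
  -- basic facts
  have hy0 : ∀ j, 0 ≤ y j := by
    intro j; rw [hydef]
    exact Finset.sum_nonneg fun a _ =>
      mul_nonneg (D.prob_nonneg a) (by split <;> norm_num)
  have hx0 : ∀ T j, 0 ≤ x T j := by
    intro T j; rw [hxdef]
    exact Finset.sum_nonneg fun a _ =>
      mul_nonneg (D.prob_nonneg a) (by split <;> norm_num)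
  have hxT : ∀ T (j : Fin m), j ∉ T → x T j = 0 := by
    intro T j hj
    rw [hxdef]
    apply Finset.sum_eq_zero
    intro a _
    rw [if_neg (fun hmem => hj ((hA (D.val a) (q T) T).1.1 hmem)), mul_zero]
  -- price / swap helpers
  have hprice : ∀ (w : Fin m → ℝ) (Bs T : Finset (Fin m)),
      priceOf w (Bs ∩ T) = ∑ j ∈ T, w j * (if j ∈ Bs then (1:ℝ) else 0) := by
    intro w Bs T
    unfold priceOf
    rw [Finset.inter_comm, ← Finset.filter_mem_eq_inter, Finset.sum_filter]
    exact Finset.sum_congr rfl fun j _ => by split <;> simp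
  have hswap : ∀ (T : Finset (Fin m)) (B : Fin D.card → Finset (Fin m)),
      (∑ a, D.prob a * (∑ j ∈ T, p j * (if j ∈ B a then (1:ℝ) else 0)))
        = ∑ j ∈ T, p j * (∑ a, D.prob a * (if j ∈ B a then (1:ℝ) else 0)) := by
    intro T B
    simp_rw [Finset.mul_sum]
    rw [Finset.sum_comm]
    refine Finset.sum_congr rfl fun j _ => Finset.sum_congr rfl fun a _ => by ring
  have hExT : ∀ T : Finset (Fin m),
      (∑ a, D.prob a * priceOf p (A (D.val a) p Finset.univ ∩ T)) = ∑ j ∈ T, p j * y j := by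
    intro T
    calc (∑ a, D.prob a * priceOf p (A (D.val a) p Finset.univ ∩ T))
        = ∑ a, D.prob a * ∑ j ∈ T, p j *
            (if j ∈ A (D.val a) p Finset.univ then (1:ℝ) else 0) := by
          exact Finset.sum_congr rfl fun a _ => by rw [hprice]
      _ = ∑ j ∈ T, p j * y j := by
          rw [hswap T (fun a => A (D.val a) p Finset.univ)]
  have hF3 : ∀ T ∈ S.powerset, (1/α) * ∑ j ∈ T, p j * y j ≤ R T := by
    intro T hT
    have h := hqb T hT
    rw [hExT T] at h
    exact h
  have hF4 : ∀ T ∈ S.powerset, (1/α) * ∑ j ∈ T, p j * x T j ≤ R T := by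
    intro T hT
    have hatom : ∀ a, (1/α) * ∑ j ∈ T, p j *
        (if j ∈ A (D.val a) (q T) T then (1:ℝ) else 0) ≤ BRev (D.val a) (q T) T := by
      intro a
      obtain ⟨hdem, hrev⟩ := hA (D.val a) (q T) T
      have hsub : A (D.val a) (q T) T ⊆ T := hdem.1
      have h1 : ∑ j ∈ T, p j * (if j ∈ A (D.val a) (q T) T then (1:ℝ) else 0)
          = ∑ j ∈ A (D.val a) (q T) T, p j := by
        rw [← hprice p (A (D.val a) (q T) T) T, Finset.inter_eq_left.2 hsub]
        rfl
      calc (1/α) * ∑ j ∈ T, p j * (if j ∈ A (D.val a) (q T) T then (1:ℝ) else 0)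
          = ∑ j ∈ A (D.val a) (q T) T, p j / α := by
            rw [h1, Finset.mul_sum]
            exact Finset.sum_congr rfl fun j _ => by rw [one_div, inv_mul_eq_div]
        _ ≤ ∑ j ∈ A (D.val a) (q T) T, q T j :=
            Finset.sum_le_sum fun j hj => hqa T hT j (hsub hj)
        _ = BRev (D.val a) (q T) T := hrev
    have hx_eq : (1/α) * ∑ j ∈ T, p j * x T j
        = ∑ a, D.prob a * ((1/α) * ∑ j ∈ T, p j *
            (if j ∈ A (D.val a) (q T) T then (1:ℝ) else 0)) := by
      rw [hxdef, ← hswap T (fun a => A (D.val a) (q T) T), Finset.mul_sum]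
      exact Finset.sum_congr rfl fun a _ => by ring
    rw [hx_eq, hRdef]
    exact Finset.sum_le_sum fun a _ => mul_le_mul_of_nonneg_left (hatom a) (D.prob_nonneg a)
  -- geometry setup
  set W : ℝ := (1/α) * ∑ j ∈ S, p j * y j with hWdef
  set β : ℝ := (1 - 1/Real.exp 1) * W with hβdef
  set P : {T : Finset (Fin m) // T ∈ S.powerset} → ((Fin m → ℝ) × ℝ) :=
    fun i => (x i.1, R i.1) with hPdef
  set φ : ({T : Finset (Fin m) // T ∈ S.powerset} → ℝ) →ₗ[ℝ] ((Fin m → ℝ) × ℝ) :=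
    { toFun := fun lam => ∑ i, lam i • P i
      map_add' := fun a b => by
        simp only [Pi.add_apply, add_smul, Finset.sum_add_distrib]
      map_smul' := fun r a => by
        simp only [Pi.smul_apply, smul_smul, RingHom.id_apply, Finset.smul_sum,
          smul_eq_mul] } with hφdef
  set K : Set ((Fin m → ℝ) × ℝ) :=
    φ '' (stdSimplex ℝ {T : Finset (Fin m) // T ∈ S.powerset}) with hKdef
  set B : Set ((Fin m → ℝ) × ℝ) := {z | (∀ j, z.1 j ≤ y j) ∧ β ≤ z.2} with hBdef
  have hφap : ∀ lam, φ lam = ∑ i, lam i • P i := fun lam => rfl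
  have hKconv : Convex ℝ K := (convex_stdSimplex ℝ _).linear_image φ
  have hKcomp : IsCompact K :=
    (isCompact_stdSimplex ℝ _).image φ.continuous_of_finiteDimensional
  have hBconv : Convex ℝ B := by
    intro z hz w hw a b ha hb hab
    constructor
    · intro j
      have h1 := hz.1 j
      have h2 := hw.1 j
      have : (a • z + b • w).1 j = a * z.1 j + b * w.1 j := rfl
      rw [this]
      calc a * z.1 j + b * w.1 j ≤ a * y j + b * y j := by
            exact add_le_add (mul_le_mul_of_nonneg_left h1 ha)
              (mul_le_mul_of_nonneg_left h2 hb)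
        _ = y j := by rw [← add_mul, hab, one_mul]
    · have h1 := hz.2
      have h2 := hw.2
      have : (a • z + b • w).2 = a * z.2 + b * w.2 := rfl
      rw [this]
      calc β = a * β + b * β := by rw [← add_mul, hab, one_mul]
        _ ≤ a * z.2 + b * w.2 := add_le_add (mul_le_mul_of_nonneg_left h1 ha)
              (mul_le_mul_of_nonneg_left h2 hb)
  have hBclosed : IsClosed B := by
    have : B = (⋂ j, {z : (Fin m → ℝ) × ℝ | z.1 j ≤ y j}) ∩
        {z : (Fin m → ℝ) × ℝ | β ≤ z.2} := by
      ext z; simp [hBdef, Set.mem_iInter]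
    rw [this]
    exact (isClosed_iInter fun j => isClosed_le
        ((continuous_apply j).comp continuous_fst) continuous_const).inter
      (isClosed_le continuous_const continuous_snd)
  have hPK : ∀ i, P i ∈ K := by
    intro i
    refine ⟨fun k => if i = k then (1:ℝ) else 0, ite_eq_mem_stdSimplex ℝ i, ?_⟩
    rw [hφap]
    simp [ite_smul, Finset.sum_ite_eq]
  -- the main nondisjointness claim
  have hmain : ¬ Disjoint K B := by
    intro hdisj
    obtain ⟨f, u, v, hfu, huv, hfv⟩ :=
      geometric_hahn_banach_compact_closed hKconv hKcomp hBconv hBclosed hdisj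
    set μ' : Fin m → ℝ := fun j => -f ((fun k => if j = k then (1:ℝ) else 0), 0) with hμ'def
    set s : ℝ := f ((0 : Fin m → ℝ), (1:ℝ)) with hsdef
    have hfz : ∀ z : (Fin m → ℝ) × ℝ,
        f z = (∑ j, z.1 j * (- μ' j)) + z.2 * s := by
      intro z
      have hz : z = (∑ j, z.1 j •
            (((fun k => if j = k then (1:ℝ) else 0) : Fin m → ℝ), (0:ℝ)))
          + z.2 • (((0 : Fin m → ℝ), (1:ℝ))) := by
        apply Prod.ext
        · rw [Prod.fst_add, Prod.fst_sum]
          simp only [Prod.smul_mk, smul_zero]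
          rw [add_zero]
          exact pi_eq_sum_univ z.1
        · rw [Prod.snd_add, Prod.snd_sum]
          simp
      conv_lhs => rw [hz]
      rw [map_add, map_sum, map_smul]
      simp only [map_smul, smul_eq_mul]
      rw [hμ'def, hsdef]
      simp only [neg_neg]
    have hyβB : ((y, β) : (Fin m → ℝ) × ℝ) ∈ B := ⟨fun j => le_rfl, le_rfl⟩
    have hs0 : 0 ≤ s := by
      apply ray_lemma (f (y, β)) s v
      intro τ hτ
      have hmem : ((y, β + τ) : (Fin m → ℝ) × ℝ) ∈ B :=
        ⟨fun j => le_rfl, by show β ≤ β + τ; linarith⟩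
      have h := hfv _ hmem
      have hpt : ((y, β + τ) : (Fin m → ℝ) × ℝ) = (y, β) + τ • ((0 : Fin m → ℝ), (1:ℝ)) := by
        apply Prod.ext <;> simp
      rw [hpt, map_add, map_smul, smul_eq_mul, ← hsdef] at h
      linarith
    have hμ'0 : ∀ j, 0 ≤ μ' j := by
      intro j
      apply ray_lemma (f (y, β)) (μ' j) v
      intro τ hτ
      have hmem : (((fun k => y k - τ * (if j = k then (1:ℝ) else 0)), β) :
          (Fin m → ℝ) × ℝ) ∈ B := by
        refine ⟨fun k => ?_, le_rfl⟩
        show y k - τ * (if j = k then (1:ℝ) else 0) ≤ y k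
        have : 0 ≤ τ * (if j = k then (1:ℝ) else 0) :=
          mul_nonneg hτ (by split <;> norm_num)
        linarith
      have h := hfv _ hmem
      have hpt : (((fun k => y k - τ * (if j = k then (1:ℝ) else 0)), β) :
          (Fin m → ℝ) × ℝ)
          = (y, β) - τ • (((fun k => if j = k then (1:ℝ) else 0) : Fin m → ℝ), (0:ℝ)) := by
        apply Prod.ext
        · rfl
        · simp
      rw [hpt, map_sub, map_smul, smul_eq_mul] at h
      have heq : τ * μ' j = -(τ * f (((fun k => if j = k then (1:ℝ) else 0) : Fin m → ℝ), 0)) := by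
        rw [hμ'def]; ring
      linarith
    have hfP : ∀ i, f (P i) = (∑ j, x i.1 j * (- μ' j)) + R i.1 * s := by
      intro i
      rw [hfz (P i), hPdef]
    have hfyβ : f (y, β) = (∑ j, y j * (- μ' j)) + β * s := hfz (y, β)
    have hvβ := hfv _ hyβB
    rw [hfyβ] at hvβ
    have hsum_neg : ∀ (w : Fin m → ℝ), (∑ j, w j * (- μ' j)) = - ∑ j, μ' j * w j := by
      intro w
      rw [← Finset.sum_neg_distrib]
      exact Finset.sum_congr rfl fun j _ => by ring
    rcases eq_or_lt_of_le hs0 with hs | hs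
    · -- s = 0 case
      have hempty := hfu (P ⟨∅, Finset.empty_mem_powerset S⟩) (hPK _)
      rw [hfP] at hempty
      have hxe : ∀ j : Fin m, x ∅ j = 0 := fun j => hxT ∅ j (Finset.notMem_empty j)
      simp only [hxe, zero_mul, Finset.sum_const_zero, zero_add] at hempty
      rw [← hs, mul_zero] at hempty
      -- hempty : 0 < u
      have h2 : v < -∑ j, μ' j * y j + β * s := by
        rw [hsum_neg] at hvβ; linarith
      rw [← hs, mul_zero] at h2
      have h3 : 0 ≤ ∑ j, μ' j * y j :=
        Finset.sum_nonneg fun j _ => mul_nonneg (hμ'0 j) (hy0 j)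
      linarith
    · -- s > 0 case
      have hne : s ≠ 0 := ne_of_gt hs
      set μhat : Fin m → ℝ := fun j => μ' j / s with hμhatdef
      have hμhat0 : ∀ j, 0 ≤ μhat j := fun j => div_nonneg (hμ'0 j) hs0
      have hdual : ∀ T ∈ S.powerset, R T ≤ u/s + ∑ j ∈ T, μhat j * x T j := by
        intro T hT
        have h := hfu (P ⟨T, hT⟩) (hPK _)
        rw [hfP ⟨T, hT⟩] at h
        simp only [hsum_neg] at h
        have hsub : (∑ j ∈ T, μ' j * x T j) = ∑ j, μ' j * x T j :=
          Finset.sum_subset (Finset.subset_univ T)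
            (fun j _ hj => by rw [hxT T j hj, mul_zero])
        -- h : -∑ j, μ' j * x T j + R T * s < u
        rw [← hsub] at h
        have hrhs : u/s + ∑ j ∈ T, μhat j * x T j
            = (u + ∑ j ∈ T, μ' j * x T j)/s := by
          rw [hμhatdef, add_div, Finset.sum_div]
          congr 1
          exact Finset.sum_congr rfl fun j _ => by ring
        rw [hrhs, le_div_iff₀ hs]
        linarith
      have hcore := core_dual_bound S p y μhat x R α (u/s) hα0 hpS hy0 hμhat0 hx0
        hF3 hF4 hdual
      rw [← hWdef, ← hβdef] at hcore
      -- hcore : β ≤ u/s + ∑ j ∈ S, μhat j * y j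
      have hmul : s * (u/s + ∑ j ∈ S, μhat j * y j) = u + ∑ j ∈ S, μ' j * y j := by
        rw [mul_add, mul_comm s (u/s), div_mul_cancel₀ u hne, hμhatdef, Finset.mul_sum]
        congr 1
        refine Finset.sum_congr rfl fun j _ => ?_
        field_simp
      have h5 : s * β ≤ u + ∑ j ∈ S, μ' j * y j := by
        rw [← hmul]
        exact mul_le_mul_of_nonneg_left hcore hs0
      have h6 : ∑ j ∈ S, μ' j * y j ≤ ∑ j, μ' j * y j :=
        Finset.sum_le_sum_of_subset_of_nonneg (Finset.subset_univ S)
          (fun j _ _ => mul_nonneg (hμ'0 j) (hy0 j))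
      rw [hsum_neg] at hvβ
      -- hvβ : v < -∑ j, μ' j * y j + β * s
      nlinarith [huv]
  -- extract the sampler
  rw [Set.not_disjoint_iff] at hmain
  obtain ⟨z, hzK, hzB⟩ := hmain
  obtain ⟨lam0, hlam0, hφz⟩ := hzK
  refine ⟨fun T => if h : T ∈ S.powerset then lam0 ⟨T, h⟩ else 0, ?_, ?_, ?_, ?_⟩
  · intro T
    dsimp only
    split
    · exact hlam0.1 _
    · exact le_rfl
  · have hsa : ∑ T ∈ S.powerset,
        (if h : T ∈ S.powerset then lam0 ⟨T, h⟩ else 0) = ∑ i, lam0 i := by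
      rw [← Finset.sum_attach S.powerset
        (fun T => if h : T ∈ S.powerset then lam0 ⟨T, h⟩ else 0)]
      rw [Finset.univ_eq_attach]
      exact Finset.sum_congr rfl fun i _ => by rw [dif_pos i.2]
    rw [hsa]
    exact hlam0.2
  · intro j
    have hz1 : z.1 j = ∑ i, lam0 i * x i.1 j := by
      rw [← hφz, hφap, Prod.fst_sum, Finset.sum_apply]
      exact Finset.sum_congr rfl fun i _ => by rw [hPdef]; rfl
    have hls : (∑ T ∈ S.powerset,
        (if h : T ∈ S.powerset then lam0 ⟨T, h⟩ else 0) * x T j) = ∑ i, lam0 i * x i.1 j := by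
      rw [← Finset.sum_attach S.powerset
        (fun T => (if h : T ∈ S.powerset then lam0 ⟨T, h⟩ else 0) * x T j)]
      rw [Finset.univ_eq_attach]
      exact Finset.sum_congr rfl fun i _ => by rw [dif_pos i.2]
    show (∑ T ∈ S.powerset,
        (if h : T ∈ S.powerset then lam0 ⟨T, h⟩ else 0) * x T j) ≤ y j
    rw [hls, ← hz1]
    exact hzB.1 j
  · have hz2 : z.2 = ∑ i, lam0 i * R i.1 := by
      rw [← hφz, hφap, Prod.snd_sum]
      exact Finset.sum_congr rfl fun i _ => by rw [hPdef]; rfl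
    have hls : (∑ T ∈ S.powerset,
        (if h : T ∈ S.powerset then lam0 ⟨T, h⟩ else 0) * R T) = ∑ i, lam0 i * R i.1 := by
      rw [← Finset.sum_attach S.powerset
        (fun T => (if h : T ∈ S.powerset then lam0 ⟨T, h⟩ else 0) * R T)]
      rw [Finset.univ_eq_attach]
      exact Finset.sum_congr rfl fun i _ => by rw [dif_pos i.2]
    show (1 - 1 / Real.exp 1) * (1 / α) *
        (∑ a, D.prob a * priceOf p (A (D.val a) p Finset.univ ∩ S)) ≤
      ∑ T ∈ S.powerset,
        (if h : T ∈ S.powerset then lam0 ⟨T, h⟩ else 0) * R T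
    rw [hls, ← hz2, hExT S]
    have hβz := hzB.2
    rw [hβdef, hWdef] at hβz
    calc (1 - 1 / Real.exp 1) * (1 / α) * (∑ j ∈ S, p j * y j)
        = (1 - 1/Real.exp 1) * ((1/α) * ∑ j ∈ S, p j * y j) := by ring
      _ ≤ z.2 := hβz
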